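/- Let n and p be positive natural numbers and let f be a multivariate polynomial over ℝ in n variables that is homogeneous of degree 2p. Then there exists a symmetric matrix A indexed by (Fin p → Fin n) × (Fin p → Fin n) with real entries (i.e. Aᵀ = A) such that for every x : Fin n → ℝ, the evaluation of f at x equals (1/2) · Σ_{j,k : Fin p → Fin n} (∏_{i : Fin p} x (j i)) · A j k · (∏_{i : Fin p} x (k i)). -/

import Mathlib

open Matrix Finset

lemma list_sum_singletons {α : Type*} (l : List α) :
    ∑ i : Fin l.length, ({l.get i} : Multiset α) = (l : Multiset α) := by
  induction l with
  | nil => simp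
  | cons a l ih =>
    show ∑ i : Fin (l.length + 1), ({(a :: l).get i} : Multiset α) = _
    rw [Fin.sum_univ_succ]
    simp only [List.get_cons_zero, Multiset.singleton_add]
    rw [show ∑ i : Fin l.length, ({(a :: l).get i.succ} : Multiset α) = ↑l from ih,
      Multiset.cons_coe]

lemma prod_pow_sum_single {n m : ℕ} (x : Fin n → ℝ) (g : Fin m → Fin n) :
    ∏ a : Fin n, x a ^ ((∑ i : Fin m, Finsupp.single (g i) 1) a) = ∏ i : Fin m, x (g i) := by
  simp_rw [Finsupp.finset_sum_apply, ← Finset.prod_pow_eq_pow_sum]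
  rw [Finset.prod_comm]
  refine Finset.prod_congr rfl fun i _ => ?_
  simp_rw [Finsupp.single_apply]
  rw [Finset.prod_congr rfl (fun a _ => ?_), Finset.prod_ite_eq' Finset.univ (g i) x]
  · simp
  · split <;> simp_all [eq_comm]

lemma sum_single_surj {n m : ℕ} (d : Fin n →₀ ℕ) (hd : (d.sum fun _ e => e) = m) :
    ∃ g : Fin m → Fin n, ∑ i : Fin m, Finsupp.single (g i) 1 = d := by
  set l := d.toMultiset.toList with hl
  have hlen : l.length = m := by
    rw [hl, Multiset.length_toList, Finsupp.card_toMultiset, ← hd]; rfl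
  refine ⟨fun i => l.get (Fin.cast hlen.symm i), ?_⟩
  have hinj : Function.Injective (Finsupp.toMultiset (α := Fin n)) := fun a b h => by
    rw [← Finsupp.toMultiset_toFinsupp a, ← Finsupp.toMultiset_toFinsupp b, h]
  apply hinj
  rw [map_sum]
  simp_rw [Finsupp.toMultiset_single, one_smul]
  rw [Fin.sum_congr' (fun i : Fin l.length => ({l.get i} : Multiset (Fin n))) hlen.symm,
    list_sum_singletons l, hl]
  simp

lemma fin_split {M : Type*} [AddCommMonoid M] {p : ℕ} (F : Fin (2 * p) → M) :
    (∑ i : Fin p, F ⟨i.1, by omega⟩) + (∑ i : Fin p, F ⟨p + i.1, by omega⟩) = ∑ i, F i := by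
  rw [← Fin.sum_congr' F ((two_mul p).symm), Fin.sum_univ_add]
  rfl

theorem homogeneous_even_degree_tensor_decomposition
    (n p : ℕ) (hn : 0 < n) (hp : 0 < p)
    (f : MvPolynomial (Fin n) ℝ) (hf : f.IsHomogeneous (2 * p)) :
    ∃ A : Matrix (Fin p → Fin n) (Fin p → Fin n) ℝ, Aᵀ = A ∧
      ∀ x : Fin n → ℝ,
        MvPolynomial.eval x f =
          (1 / 2) * ∑ j : Fin p → Fin n, ∑ k : Fin p → Fin n,
            (∏ i : Fin p, x (j i)) * A j k * (∏ i : Fin p, x (k i)) := by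
  classical
  set φ : (Fin p → Fin n) × (Fin p → Fin n) → (Fin n →₀ ℕ) :=
    fun q => (∑ i : Fin p, Finsupp.single (q.1 i) 1) +
      (∑ i : Fin p, Finsupp.single (q.2 i) 1) with hφ
  set N : (Fin n →₀ ℕ) → ℕ := fun d => (Finset.univ.filter fun q => φ q = d).card with hN
  refine ⟨fun j k => 2 * f.coeff (φ (j, k)) / (N (φ (j, k)) : ℝ), ?_, ?_⟩
  · ext j k
    have h : φ (k, j) = φ (j, k) := add_comm _ _
    show 2 * f.coeff (φ (k, j)) / (N (φ (k, j)) : ℝ) = _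
    rw [h]
  · intro x
    -- support of f maps into image of φ
    have hsurj : ∀ d ∈ f.support, d ∈ Finset.univ.image φ := by
      intro d hd
      have hdeg : (d.sum fun _ e => e) = 2 * p := by
        have := hf (MvPolynomial.mem_support_iff.mp hd)
        simpa [Finsupp.weight_apply, Finsupp.sum] using this
      obtain ⟨g, hg⟩ := sum_single_surj d hdeg
      refine Finset.mem_image.mpr ⟨((fun i => g ⟨i.1, by omega⟩), fun i => g ⟨p + i.1, by omega⟩),
        Finset.mem_univ _, ?_⟩
      rw [hφ]
      dsimp only
      rw [fin_split (fun i => Finsupp.single (g i) 1)]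
      exact hg
    set X : (Fin n →₀ ℕ) → ℝ := fun d => ∏ a, x a ^ d a with hX
    have hprod : ∀ q : (Fin p → Fin n) × (Fin p → Fin n),
        (∏ i, x (q.1 i)) * (∏ i, x (q.2 i)) = X (φ q) := by
      intro q
      rw [← prod_pow_sum_single x q.1, ← prod_pow_sum_single x q.2, ← Finset.prod_mul_distrib]
      exact Finset.prod_congr rfl fun a _ => by rw [hφ]; simp [pow_add]
    have key : ∑ j : Fin p → Fin n, ∑ k : Fin p → Fin n,
        (∏ i : Fin p, x (j i)) * (2 * f.coeff (φ (j, k)) / (N (φ (j, k)) : ℝ)) *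
          (∏ i : Fin p, x (k i))
        = ∑ q : (Fin p → Fin n) × (Fin p → Fin n),
            (2 * f.coeff (φ q) / (N (φ q) : ℝ)) * X (φ q) := by
      rw [Fintype.sum_prod_type]
      refine Finset.sum_congr rfl fun j _ => Finset.sum_congr rfl fun k _ => ?_
      rw [← hprod (j, k)]
      ring
    rw [key, Finset.sum_comp (fun d => (2 * f.coeff d / (N d : ℝ)) * X d) φ]
    have himg : ∀ d ∈ Finset.univ.image φ,
        ((Finset.univ.filter fun q => φ q = d).card : ℝ) ≠ 0 := by
      intro d hd
      obtain ⟨q, _, hq⟩ := Finset.mem_image.mp hd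
      have : q ∈ Finset.univ.filter fun q => φ q = d := Finset.mem_filter.mpr ⟨Finset.mem_univ _, hq⟩
      exact_mod_cast Finset.card_ne_zero_of_mem this
    rw [Finset.mul_sum]
    have : ∀ d ∈ Finset.univ.image φ,
        (1 / 2 : ℝ) * ((Finset.univ.filter fun q => φ q = d).card •
          ((2 * f.coeff d / (N d : ℝ)) * X d)) = f.coeff d * X d := by
      intro d hd
      have hne := himg d hd
      rw [nsmul_eq_mul, hN]
      field_simp
    rw [Finset.sum_congr rfl this]
    rw [MvPolynomial.eval_eq' x f]
    exact Finset.sum_subset hsurj fun d _ hd => by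
      rw [MvPolynomial.notMem_support_iff.mp hd, zero_mul]
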